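/- Let ξ, η ∈ c₀* with ξ ≺ η. Then: (i) there exists ζ ∈ c₀* with ξ ≼ ζ and ζ_j ≤ η_j for all j; and (ii) there exists ρ ∈ c₀* with ξ_j ≤ ρ_j for all j and ρ ≼ η. -/

import Mathlib

noncomputable section

open Filter Finset

/-- `ξ ∈ c₀*`: a nonnegative, nonincreasing sequence converging to `0`
(indexed from `0` here; the paper indexes from `1`). -/
def IsCoStar (ξ : ℕ → ℝ) : Prop :=
  (∀ n, 0 ≤ ξ n) ∧ Antitone ξ ∧ Tendsto ξ atTop (nhds 0)

/-- `ξ ≺ η` (η majorizes ξ): all partial sums of `ξ` are dominated by those of `η`. -/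
def Maj (ξ η : ℕ → ℝ) : Prop :=
  ∀ n : ℕ, ∑ j ∈ range n, ξ j ≤ ∑ j ∈ range n, η j

/-- `ξ ≼ η` (η strongly majorizes ξ): `ξ ≺ η` and
`liminf_n ∑_{j<n} (η_j - ξ_j) = 0` (the liminf taken in the extended reals). -/
def SMaj (ξ η : ℕ → ℝ) : Prop :=
  Maj ξ η ∧
    liminf (fun n => ((∑ j ∈ range n, (η j - ξ j) : ℝ) : EReal)) atTop = 0

/-- A matrix `U : ℕ × ℕ → ℝ` is orthogonal if its rows form an orthonormal family in ℓ²
and its columns form an orthonormal family in ℓ². -/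
def OrthogonalMatrix (U : ℕ → ℕ → ℝ) : Prop :=
  (∀ i i', HasSum (fun j => U i j * U i' j) (if i = i' then (1 : ℝ) else 0)) ∧
  (∀ j j', HasSum (fun i => U i j * U i j') (if j = j' then (1 : ℝ) else 0))

/-- A matrix `Q` is orthostochastic if it is the entrywise square of an orthogonal matrix. -/
def Orthostochastic (Q : ℕ → ℕ → ℝ) : Prop :=
  ∃ U : ℕ → ℕ → ℝ, OrthogonalMatrix U ∧ ∀ i j, Q i j = (U i j) ^ 2

namespace Stmt17Aux

open scoped Classical

def PS (f : ℕ → ℝ) (n : ℕ) : ℝ := ∑ j ∈ range n, f j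

lemma PS_zero (f : ℕ → ℝ) : PS f 0 = 0 := by simp [PS]

lemma PS_succ (f : ℕ → ℝ) (n : ℕ) : PS f (n + 1) = PS f n + f n := sum_range_succ f n

lemma PS_mono {f : ℕ → ℝ} (hf : ∀ n, 0 ≤ f n) : Monotone (PS f) := by
  apply monotone_nat_of_le_succ
  intro n
  rw [PS_succ]
  linarith [hf n]

lemma PS_shift (f : ℕ → ℝ) (s k : ℕ) :
    PS f (s + k) = PS f s + ∑ i ∈ range k, f (s + i) := by
  induction k with
  | zero => simp
  | succ k ih =>
    rw [← add_assoc, PS_succ, ih, sum_range_succ]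
    ring

lemma sum_le_nmul {f : ℕ → ℝ} (hf : Antitone f) (s k : ℕ) :
    ∑ i ∈ range k, f (s + i) ≤ (k : ℝ) * f s := by
  calc ∑ i ∈ range k, f (s + i) ≤ ∑ _i ∈ range k, f s :=
        Finset.sum_le_sum fun i _ => hf (by omega)
    _ = (k : ℝ) * f s := by simp [mul_comm]

lemma tendsto_zero_of_PS_le {ρ η : ℕ → ℝ} (hρa : Antitone ρ) (hρ0 : ∀ n, 0 ≤ ρ n)
    (hη0 : ∀ n, 0 ≤ η n) (hηa : Antitone η) (hηt : Tendsto η atTop (nhds 0))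
    (hle : ∀ n, PS ρ n ≤ PS η n) : Tendsto ρ atTop (nhds 0) := by
  rw [Metric.tendsto_atTop]
  intro ε hε
  have key : ∃ N, ρ N < ε := by
    by_contra h
    push_neg at h
    have hPSρ : ∀ n : ℕ, (n : ℝ) * ε ≤ PS ρ n := by
      intro n
      calc (n : ℝ) * ε = ∑ _j ∈ range n, ε := by simp [mul_comm]
        _ ≤ ∑ j ∈ range n, ρ j := Finset.sum_le_sum fun j _ => h j
        _ = PS ρ n := rfl
    obtain ⟨M, hM⟩ : ∃ M, η M < ε / 2 := by
      have := (hηt.eventually (gt_mem_nhds (show (0:ℝ) < ε / 2 by linarith))).exists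
      exact this
    obtain ⟨n0, hn0⟩ := exists_nat_gt ((PS η M + (M:ℝ) * ε) / (ε / 2))
    set n := n0 + M with hn
    have h1 : PS η n = PS η M + ∑ i ∈ range n0, η (M + i) := by
      rw [hn, add_comm n0 M, PS_shift]
    have h2 : ∑ i ∈ range n0, η (M + i) ≤ (n0 : ℝ) * (ε / 2) := by
      calc ∑ i ∈ range n0, η (M + i) ≤ (n0 : ℝ) * η M := sum_le_nmul hηa M n0
        _ ≤ (n0 : ℝ) * (ε / 2) := by
            apply mul_le_mul_of_nonneg_left (le_of_lt hM) (by positivity)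
    have h3 : (n : ℝ) * ε ≤ PS η n := (hPSρ n).trans (hle n)
    have h5 : (n0 : ℝ) * (ε / 2) > PS η M + (M:ℝ) * ε := by
      rw [gt_iff_lt, ← div_lt_iff₀ (by linarith : (0:ℝ) < ε / 2)]
      exact hn0
    have hcast : ((n : ℕ) : ℝ) = (n0 : ℝ) + (M : ℝ) := by
      rw [hn]; push_cast; ring
    nlinarith [hη0 M, hρ0 n, Nat.cast_nonneg (α := ℝ) M, Nat.cast_nonneg (α := ℝ) n0]
  obtain ⟨N, hN⟩ := key
  refine ⟨N, fun n hn => ?_⟩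
  rw [Real.dist_eq, sub_zero, abs_of_nonneg (hρ0 n)]
  exact lt_of_le_of_lt (hρa hn) hN


/-- liminf of a nonneg real sequence that dips below every positive bound i.o. is 0 (in EReal). -/
lemma liminf_zero_of_dips {D : ℕ → ℝ} (h0 : ∀ n, 0 ≤ D n)
    (hdip : ∀ r : ℝ, 0 < r → ∀ N : ℕ, ∃ m, N ≤ m ∧ D m ≤ r) :
    liminf (fun n => ((D n : ℝ) : EReal)) atTop = 0 := by
  refine le_antisymm ?_ ?_
  · by_contra h
    rw [not_le] at h
    obtain ⟨r, hr0, hrL⟩ := EReal.exists_between_coe_real h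
    have hr0' : (0 : ℝ) < r := by exact_mod_cast hr0
    have : liminf (fun n => ((D n : ℝ) : EReal)) atTop ≤ (r : EReal) := by
      apply liminf_le_of_frequently_le'
      rw [frequently_atTop]
      intro N
      obtain ⟨m, hm, hD⟩ := hdip r hr0' N
      exact ⟨m, hm, by exact_mod_cast hD⟩
    exact absurd (lt_of_le_of_lt this hrL) (lt_irrefl _)
  · rw [liminf_eq]
    apply le_sSup
    simp only [Set.mem_setOf_eq]
    filter_upwards with n
    exact_mod_cast h0 n


section PartIBounded

variable {ξ η : ℕ → ℝ}

/-- Part (i), bounded-sum case. -/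
lemma part_i_bounded (hξ0 : ∀ n, 0 ≤ ξ n) (hη0 : ∀ n, 0 ≤ η n) (hηa : Antitone η)
    (hmaj : ∀ n, PS ξ n ≤ PS η n) (hB : BddAbove (Set.range (PS ξ))) :
    ∃ ζ : ℕ → ℝ, (∀ n, 0 ≤ ζ n) ∧ Antitone ζ ∧ (∀ n, ζ n ≤ η n) ∧
      (∀ n, PS ξ n ≤ PS ζ n) ∧
      Tendsto (fun n => PS ζ n - PS ξ n) atTop (nhds 0) := by
  set s := ⨆ n, PS ξ n with hs
  have hles : ∀ n, PS ξ n ≤ s := fun n => le_ciSup hB n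
  have hs0 : 0 ≤ s := by simpa [PS_zero] using hles 0
  set T : ℕ → ℝ := fun n => min s (PS η n) with hT
  refine ⟨fun n => T (n + 1) - T n, ?_, ?_, ?_, ?_, ?_⟩
  all_goals try skip
  · intro n
    have : T n ≤ T (n + 1) :=
      min_le_min le_rfl (PS_mono hη0 (Nat.le_succ n))
    show (0:ℝ) ≤ T (n + 1) - T n
    linarith
  · apply antitone_nat_of_succ_le
    intro n
    have e1 : PS η (n + 1) = PS η n + η n := PS_succ η n
    have e2 : PS η (n + 2) = PS η (n + 1) + η (n + 1) := PS_succ η (n + 1)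
    have e3 : η (n + 1) ≤ η n := hηa (Nat.le_succ n)
    have e4 : 0 ≤ η n := hη0 n
    have e5 : 0 ≤ η (n + 1) := hη0 (n + 1)
    simp only [hT, min_def]
    split_ifs <;> linarith
  · intro n
    have e1 : PS η (n + 1) = PS η n + η n := PS_succ η n
    simp only [hT, min_def]
    split_ifs <;> linarith [hη0 n]
  · intro n
    have htel : PS (fun j => T (j + 1) - T j) n = T n - T 0 := by
      exact Finset.sum_range_sub T n
    rw [htel]
    have hT0 : T 0 = 0 := by
      simp [hT, PS_zero, min_eq_right hs0]
    rw [hT0, sub_zero]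
    exact le_min (hles n) (hmaj n)
  · have htel : ∀ n, PS (fun j => T (j + 1) - T j) n = T n := by
      intro n
      have : PS (fun j => T (j + 1) - T j) n = T n - T 0 := Finset.sum_range_sub T n
      rw [this]
      simp [hT, PS_zero, min_eq_right hs0]
    have hξs : Tendsto (PS ξ) atTop (nhds s) := tendsto_atTop_ciSup (PS_mono hξ0) hB
    have hup : Tendsto (fun n => s - PS ξ n) atTop (nhds 0) := by
      have h' : Tendsto (fun n => s - PS ξ n) atTop (nhds (s - s)) :=
        tendsto_const_nhds.sub hξs
      simpa using h'
    apply squeeze_zero (fun n => ?_) (fun n => ?_) hup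
    · rw [htel n]
      have := le_min (hles n) (hmaj n)
      linarith
    · rw [htel n]
      have : T n ≤ s := min_le_left _ _
      linarith

end PartIBounded

section PartIUnbounded

variable (ξ η : ℕ → ℝ)

def Un (n : ℕ) (S : ℝ) (s : ℕ) : Prop :=
  ∃ k, 1 ≤ k ∧ S + ∑ i ∈ range k, η (s + i) < PS ξ (n + k)

variable {ξ η}

lemma exists_unsafe (hηa : Antitone η) (hηt : Tendsto η atTop (nhds 0))
    (hunb : ¬ BddAbove (Set.range (PS ξ))) (hξ0 : ∀ n, 0 ≤ ξ n)
    (n : ℕ) (S : ℝ) (t : ℕ) : ∃ s, t ≤ s ∧ Un ξ η n S s := by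
  obtain ⟨M0, hM0⟩ : ∃ M, S + 1 < PS ξ M := by
    by_contra h
    push_neg at h
    exact hunb ⟨S + 1, by rintro x ⟨m, rfl⟩; exact h m⟩
  set M := max M0 (n + 1) with hM
  have hMlt : S + 1 < PS ξ M := lt_of_lt_of_le hM0 (PS_mono hξ0 (le_max_left _ _))
  set k := M - n with hk
  have hk1 : 1 ≤ k := by omega
  have hMk : n + k = M := by omega
  obtain ⟨s0, hs0⟩ : ∃ s0, ∀ s ≥ s0, η s < 1 / (k : ℝ) := by
    have hpos : (0 : ℝ) < 1 / (k : ℝ) := by positivity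
    have := hηt.eventually (gt_mem_nhds hpos)
    rw [eventually_atTop] at this
    obtain ⟨s0, h⟩ := this
    exact ⟨s0, fun s hs => h s hs⟩
  refine ⟨max t s0, le_max_left _ _, k, hk1, ?_⟩
  have h1 : ∑ i ∈ range k, η (max t s0 + i) ≤ (k : ℝ) * η (max t s0) := sum_le_nmul hηa _ _
  have h2 : η (max t s0) < 1 / (k : ℝ) := hs0 _ (le_max_right _ _)
  have h3 : (k : ℝ) * η (max t s0) < (k : ℝ) * (1 / (k : ℝ)) := by
    apply mul_lt_mul_of_pos_left h2
    exact_mod_cast hk1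
  have h4 : (k : ℝ) * (1 / (k : ℝ)) = 1 := by
    field_simp
  rw [hMk]
  nlinarith

variable (ξ η)

noncomputable def stI (hηa : Antitone η) (hηt : Tendsto η atTop (nhds 0))
    (hunb : ¬ BddAbove (Set.range (PS ξ))) (hξ0 : ∀ n, 0 ≤ ξ n) : ℕ → ℕ × ℝ
  | 0 => (0, 0)
  | n + 1 =>
    let p := stI hηa hηt hunb hξ0 n
    let u := Nat.find (exists_unsafe hηa hηt hunb hξ0 n p.2 p.1)
    (u, p.2 + η (u - 1))

variable {ξ η}
variable (hηa : Antitone η) (hηt : Tendsto η atTop (nhds 0))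
    (hunb : ¬ BddAbove (Set.range (PS ξ))) (hξ0 : ∀ n, 0 ≤ ξ n)

noncomputable def sigI (n : ℕ) : ℕ := (stI ξ η hηa hηt hunb hξ0 (n + 1)).1 - 1

lemma stI_succ (n : ℕ) :
    stI ξ η hηa hηt hunb hξ0 (n + 1) =
      (Nat.find (exists_unsafe hηa hηt hunb hξ0 n (stI ξ η hηa hηt hunb hξ0 n).2
          (stI ξ η hηa hηt hunb hξ0 n).1),
       (stI ξ η hηa hηt hunb hξ0 n).2 +
         η (Nat.find (exists_unsafe hηa hηt hunb hξ0 n (stI ξ η hηa hηt hunb hξ0 n).2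
          (stI ξ η hηa hηt hunb hξ0 n).1) - 1)) := by
  rfl

lemma stI_inv (hmaj : ∀ n, PS ξ n ≤ PS η n) : ∀ n k : ℕ,
    PS ξ (n + k) ≤ (stI ξ η hηa hηt hunb hξ0 n).2 +
      ∑ i ∈ range k, η ((stI ξ η hηa hηt hunb hξ0 n).1 + i) := by
  intro n
  induction n with
  | zero =>
    intro k
    have h1 : ∑ i ∈ range k, η (0 + i) = PS η k := by simp [PS]
    show PS ξ (0 + k) ≤ 0 + ∑ i ∈ range k, η (0 + i)
    rw [h1, Nat.zero_add, zero_add]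
    exact hmaj k
  | succ n ih =>
    intro k
    set p := stI ξ η hηa hηt hunb hξ0 n with hp
    set u := Nat.find (exists_unsafe hηa hηt hunb hξ0 n p.2 p.1) with hu
    have hspec := Nat.find_spec (exists_unsafe hηa hηt hunb hξ0 n p.2 p.1)
    rw [← hu] at hspec
    have hnotUt : ¬ Un ξ η n p.2 p.1 := by
      rintro ⟨k', hk1, hlt⟩
      exact absurd (ih k') (not_le.2 hlt)
    have hut : u ≠ p.1 := by
      intro h
      exact hnotUt (h ▸ hspec.2)
    have hu1 : p.1 + 1 ≤ u := by
      have := hspec.1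
      omega
    have hnotU : ¬ Un ξ η n p.2 (u - 1) := by
      intro hU
      have hlt : u - 1 < u := by omega
      exact Nat.find_min (exists_unsafe hηa hηt hunb hξ0 n p.2 p.1) hlt ⟨by omega, hU⟩
    have hkey : PS ξ (n + (k + 1)) ≤ p.2 + ∑ i ∈ range (k + 1), η (u - 1 + i) := by
      by_contra h
      exact hnotU ⟨k + 1, by omega, not_le.1 h⟩
    have hsum : ∑ i ∈ range (k + 1), η (u - 1 + i)
        = η (u - 1) + ∑ i ∈ range k, η (u + i) := by
      rw [Finset.sum_range_succ']
      have heq : ∀ i, u - 1 + (i + 1) = u + i := fun i => by omega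
      simp only [heq, Nat.add_zero]
      ring
    have hst : stI ξ η hηa hηt hunb hξ0 (n + 1) = (u, p.2 + η (u - 1)) := by
      rw [stI_succ]
    rw [hst]
    have hnk : n + 1 + k = n + (k + 1) := by omega
    rw [hnk]
    calc PS ξ (n + (k + 1)) ≤ p.2 + ∑ i ∈ range (k + 1), η (u - 1 + i) := hkey
      _ = p.2 + η (u - 1) + ∑ i ∈ range k, η (u + i) := by rw [hsum]; ring

lemma stI_fst_succ (hmaj : ∀ n, PS ξ n ≤ PS η n) (n : ℕ) :
    (stI ξ η hηa hηt hunb hξ0 n).1 + 1 ≤ (stI ξ η hηa hηt hunb hξ0 (n + 1)).1 := by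
  set p := stI ξ η hηa hηt hunb hξ0 n with hp
  set u := Nat.find (exists_unsafe hηa hηt hunb hξ0 n p.2 p.1) with hu
  have hspec := Nat.find_spec (exists_unsafe hηa hηt hunb hξ0 n p.2 p.1)
  rw [← hu] at hspec
  have hnotUt : ¬ Un ξ η n p.2 p.1 := by
    rintro ⟨k', hk1, hlt⟩
    exact absurd (stI_inv hηa hηt hunb hξ0 hmaj n k') (not_le.2 hlt)
  have hut : u ≠ p.1 := fun h => hnotUt (h ▸ hspec.2)
  have hst : (stI ξ η hηa hηt hunb hξ0 (n + 1)).1 = u := by rw [stI_succ]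
  rw [hst]
  have := hspec.1
  omega

lemma stI_fst_ge (hmaj : ∀ n, PS ξ n ≤ PS η n) (n : ℕ) :
    n ≤ (stI ξ η hηa hηt hunb hξ0 n).1 := by
  induction n with
  | zero => omega
  | succ n ih => have := stI_fst_succ hηa hηt hunb hξ0 hmaj n; omega

lemma sigI_succ_ge (hmaj : ∀ n, PS ξ n ≤ PS η n) (n : ℕ) :
    sigI hηa hηt hunb hξ0 n + 1 ≤ sigI hηa hηt hunb hξ0 (n + 1) := by
  have h1 := stI_fst_succ hηa hηt hunb hξ0 hmaj (n + 1)
  have h2 := stI_fst_ge hηa hηt hunb hξ0 hmaj (n + 1)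
  unfold sigI
  omega

lemma sigI_ge (hmaj : ∀ n, PS ξ n ≤ PS η n) (n : ℕ) :
    n ≤ sigI hηa hηt hunb hξ0 n := by
  have h2 := stI_fst_ge hηa hηt hunb hξ0 hmaj (n + 1)
  unfold sigI
  omega

lemma sigI_add_ge (hmaj : ∀ n, PS ξ n ≤ PS η n) (n i : ℕ) :
    sigI hηa hηt hunb hξ0 n + i ≤ sigI hηa hηt hunb hξ0 (n + i) := by
  induction i with
  | zero => simp
  | succ i ih =>
    have := sigI_succ_ge hηa hηt hunb hξ0 hmaj (n + i)
    have h2 : n + (i + 1) = (n + i) + 1 := by omega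
    rw [h2]
    omega

lemma PS_zeta (n : ℕ) :
    PS (fun j => η (sigI hηa hηt hunb hξ0 j)) n = (stI ξ η hηa hηt hunb hξ0 n).2 := by
  induction n with
  | zero => rw [PS_zero]; rfl
  | succ n ih =>
    rw [PS_succ, ih]
    rfl

lemma surplus_dip (hmaj : ∀ n, PS ξ n ≤ PS η n) (hη0 : ∀ n, 0 ≤ η n) (n : ℕ) :
    ∃ m, n < m ∧
      PS (fun j => η (sigI hηa hηt hunb hξ0 j)) m - PS ξ m ≤ η n := by
  set p := stI ξ η hηa hηt hunb hξ0 n with hp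
  set u := Nat.find (exists_unsafe hηa hηt hunb hξ0 n p.2 p.1) with hu
  have hspec := Nat.find_spec (exists_unsafe hηa hηt hunb hξ0 n p.2 p.1)
  rw [← hu] at hspec
  obtain ⟨k, hk1, hlt⟩ := hspec.2
  have hσn : sigI hηa hηt hunb hξ0 n = u - 1 := by
    unfold sigI
    rw [show (stI ξ η hηa hηt hunb hξ0 (n+1)).1 = u from by rw [stI_succ]]
  have hu1 : 1 ≤ u := by
    have hnotUt : ¬ Un ξ η n p.2 p.1 := by
      rintro ⟨k', hk1', hlt'⟩
      exact absurd (stI_inv hηa hηt hunb hξ0 hmaj n k') (not_le.2 hlt')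
    have hut : u ≠ p.1 := fun h => hnotUt (h ▸ hspec.2)
    have := hspec.1
    omega
  refine ⟨n + k, by omega, ?_⟩
  set ζ : ℕ → ℝ := fun j => η (sigI hηa hηt hunb hξ0 j) with hζ
  have hPSm : PS ζ (n + k) = p.2 + ∑ i ∈ range k, η (sigI hηa hηt hunb hξ0 (n + i)) := by
    rw [PS_shift]
    rw [PS_zeta]
  have hterm : ∀ i, η (sigI hηa hηt hunb hξ0 (n + i)) ≤ η ((u - 1) + i) := by
    intro i
    apply hηa
    have := sigI_add_ge hηa hηt hunb hξ0 hmaj n i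
    omega
  have hb : PS ζ (n + k) ≤ p.2 + ∑ i ∈ range k, η ((u - 1) + i) := by
    rw [hPSm]
    have := Finset.sum_le_sum (fun i (_ : i ∈ range k) => hterm i)
    linarith
  have htel : ∑ i ∈ range k, η (u - 1 + i) - ∑ i ∈ range k, η (u + i)
      = η (u - 1) - η (u - 1 + k) := by
    calc ∑ i ∈ range k, η (u - 1 + i) - ∑ i ∈ range k, η (u + i)
        = ∑ i ∈ range k, ((fun j => η (u - 1 + j)) i - (fun j => η (u - 1 + j)) (i + 1)) := by
          rw [← Finset.sum_sub_distrib]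
          apply Finset.sum_congr rfl
          intro i _
          simp only
          have heq : u - 1 + (i + 1) = u + i := by omega
          rw [heq]
      _ = η (u - 1 + 0) - η (u - 1 + k) := Finset.sum_range_sub' (fun j => η (u - 1 + j)) k
      _ = η (u - 1) - η (u - 1 + k) := by norm_num
  have hηk : 0 ≤ η (u - 1 + k) := hη0 _
  have hσnn : η (sigI hηa hηt hunb hξ0 n) ≤ η n := hηa (sigI_ge hηa hηt hunb hξ0 hmaj n)
  rw [hσn] at hσnn
  have hfin : PS ζ (n + k) - PS ξ (n + k) < η (u - 1) - η (u - 1 + k) := by linarith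
  linarith

lemma sigI_mono (hmaj : ∀ n, PS ξ n ≤ PS η n) {a b : ℕ} (hab : a ≤ b) :
    sigI hηa hηt hunb hξ0 a ≤ sigI hηa hηt hunb hξ0 b := by
  have h := sigI_add_ge hηa hηt hunb hξ0 hmaj a (b - a)
  rw [show a + (b - a) = b from by omega] at h
  omega

/-- Part (i), unbounded-sum case. -/
lemma part_i_unbounded (hη0 : ∀ n, 0 ≤ η n)
    (hmaj : ∀ n, PS ξ n ≤ PS η n)
    (hηa : Antitone η) (hηt : Tendsto η atTop (nhds 0))
    (hunb : ¬ BddAbove (Set.range (PS ξ))) (hξ0 : ∀ n, 0 ≤ ξ n) :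
    ∃ ζ : ℕ → ℝ, (∀ n, 0 ≤ ζ n) ∧ Antitone ζ ∧ (∀ n, ζ n ≤ η n) ∧
      (∀ n, PS ξ n ≤ PS ζ n) ∧
      (∀ r : ℝ, 0 < r → ∀ N : ℕ, ∃ m, N ≤ m ∧ PS ζ m - PS ξ m ≤ r) := by
  refine ⟨fun j => η (sigI hηa hηt hunb hξ0 j), fun n => hη0 _, ?_, ?_, ?_, ?_⟩
  · intro a b hab
    exact hηa (sigI_mono hηa hηt hunb hξ0 hmaj hab)
  · intro n
    exact hηa (sigI_ge hηa hηt hunb hξ0 hmaj n)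
  · intro n
    have := stI_inv hηa hηt hunb hξ0 hmaj n 0
    rw [PS_zeta]
    simpa using this
  · intro r hr N
    obtain ⟨n0, hn0⟩ : ∃ n0, ∀ s ≥ n0, η s < r := by
      have := hηt.eventually (gt_mem_nhds hr)
      rw [eventually_atTop] at this
      obtain ⟨s0, h⟩ := this
      exact ⟨s0, fun s hs => h s hs⟩
    set n := max N n0 with hn
    obtain ⟨m, hm1, hm2⟩ := surplus_dip hηa hηt hunb hξ0 hmaj hη0 n
    refine ⟨m, by omega, ?_⟩
    have : η n < r := hn0 n (le_max_right _ _)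
    linarith

end PartIUnbounded

section PartII

variable (ξ η : ℕ → ℝ)

/-- the lookahead budget set at step `n`, given current partial sum `S` of ρ. -/
def BII (n : ℕ) (S : ℝ) : Set ℝ :=
  (fun m => PS η m - S - (PS ξ m - PS ξ (n + 1))) '' Set.Ioi n

/-- state: `(stII n).1 = PS ρ n`, `(stII n).2 = ρ (n-1)` (with `ρ (-1) := η 0`). -/
noncomputable def stII : ℕ → ℝ × ℝ
  | 0 => (0, η 0)
  | n + 1 =>
    let p := stII n
    let β := sInf (BII ξ η n p.1)
    let r := min p.2 β
    (p.1 + r, r)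

noncomputable def rhoII (n : ℕ) : ℝ := (stII ξ η (n + 1)).2

noncomputable def betaII (n : ℕ) : ℝ := sInf (BII ξ η n (stII ξ η n).1)

lemma stII_succ (n : ℕ) :
    stII ξ η (n + 1) =
      ((stII ξ η n).1 + min (stII ξ η n).2 (betaII ξ η n),
        min (stII ξ η n).2 (betaII ξ η n)) := rfl

lemma rhoII_eq (n : ℕ) : rhoII ξ η n = min (stII ξ η n).2 (betaII ξ η n) := rfl

lemma PS_rhoII (n : ℕ) : PS (rhoII ξ η) n = (stII ξ η n).1 := by
  induction n with
  | zero => rw [PS_zero]; rfl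
  | succ n ih => rw [PS_succ, ih]; rfl

lemma BII_nonempty (n : ℕ) (S : ℝ) : (BII ξ η n S).Nonempty :=
  ⟨_, ⟨n + 1, by simp, rfl⟩⟩

variable {ξ η}

lemma BII_lb (hmaj : ∀ m, PS ξ m ≤ PS η m) (hQ : ∀ m, n ≤ m → (stII ξ η n).1 + (PS ξ m - PS ξ n) ≤ PS η m)
    (n : ℕ) : True := trivial

/-- The fundamental invariant `Q`. -/
lemma stII_inv (hmaj : ∀ m, PS ξ m ≤ PS η m) :
    ∀ n, ∀ m, n ≤ m → (stII ξ η n).1 + (PS ξ m - PS ξ n) ≤ PS η m := by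
  intro n
  induction n with
  | zero =>
    intro m _
    have : (stII ξ η 0).1 = 0 := rfl
    rw [this, PS_zero]
    linarith [hmaj m]
  | succ n ih =>
    -- elements of BII are ≥ ξ n
    have helem : ∀ x ∈ BII ξ η n (stII ξ η n).1, ξ n ≤ x := by
      rintro x ⟨m, hm, rfl⟩
      have hm' : n ≤ m := le_of_lt hm
      have h1 := ih m hm'
      have h2 : PS ξ (n + 1) = PS ξ n + ξ n := PS_succ ξ n
      simp only
      linarith
    have hbdd : BddBelow (BII ξ η n (stII ξ η n).1) := ⟨ξ n, helem⟩
    intro m hm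
    have hmIoi : m ∈ Set.Ioi n := hm
    have hle : betaII ξ η n ≤ PS η m - (stII ξ η n).1 - (PS ξ m - PS ξ (n + 1)) :=
      csInf_le hbdd ⟨m, hmIoi, rfl⟩
    have hfst : (stII ξ η (n + 1)).1 = (stII ξ η n).1 + min (stII ξ η n).2 (betaII ξ η n) := rfl
    rw [hfst]
    have hminle : min (stII ξ η n).2 (betaII ξ η n) ≤ betaII ξ η n := min_le_right _ _
    linarith

lemma betaII_ge (hmaj : ∀ m, PS ξ m ≤ PS η m) (n : ℕ) : ξ n ≤ betaII ξ η n := by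
  apply le_csInf (BII_nonempty ξ η n _)
  rintro x ⟨m, hm, rfl⟩
  have h1 := stII_inv hmaj n m (le_of_lt hm)
  have h2 : PS ξ (n + 1) = PS ξ n + ξ n := PS_succ ξ n
  simp only
  linarith

lemma rhoII_ge (hmaj : ∀ m, PS ξ m ≤ PS η m) (hξa : Antitone ξ) (n : ℕ) :
    ξ n ≤ rhoII ξ η n := by
  rw [rhoII_eq]
  apply le_min ?_ (betaII_ge hmaj n)
  induction n with
  | zero =>
    have : (stII ξ η 0).2 = η 0 := rfl
    rw [this]
    have := hmaj 1
    simp only [PS, range_one, sum_singleton] at this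
    exact this
  | succ n ih =>
    have h1 : (stII ξ η (n + 1)).2 = rhoII ξ η n := rfl
    rw [h1]
    calc ξ (n + 1) ≤ ξ n := hξa (Nat.le_succ n)
      _ ≤ rhoII ξ η n := by
          rw [rhoII_eq]
          exact le_min (ih) (betaII_ge hmaj n)

lemma rhoII_antitone : Antitone (rhoII ξ η) := by
  apply antitone_nat_of_succ_le
  intro n
  rw [rhoII_eq (n := n + 1)]
  have : (stII ξ η (n + 1)).2 = rhoII ξ η n := rfl
  rw [this]
  exact min_le_left _ _

lemma PS_rhoII_le (hmaj : ∀ m, PS ξ m ≤ PS η m) (n : ℕ) : PS (rhoII ξ η) n ≤ PS η n := by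
  rw [PS_rhoII]
  have := stII_inv hmaj n n le_rfl
  linarith

lemma rhoII_nonneg (hmaj : ∀ m, PS ξ m ≤ PS η m) (hξa : Antitone ξ) (hξ0 : ∀ n, 0 ≤ ξ n)
    (n : ℕ) : 0 ≤ rhoII ξ η n := (hξ0 n).trans (rhoII_ge hmaj hξa n)

lemma rhoII_tendsto (hmaj : ∀ m, PS ξ m ≤ PS η m) (hξa : Antitone ξ) (hξ0 : ∀ n, 0 ≤ ξ n)
    (hη0 : ∀ n, 0 ≤ η n) (hηa : Antitone η) (hηt : Tendsto η atTop (nhds 0)) :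
    Tendsto (rhoII ξ η) atTop (nhds 0) :=
  tendsto_zero_of_PS_le rhoII_antitone (rhoII_nonneg hmaj hξa hξ0) hη0 hηa hηt
    (PS_rhoII_le hmaj)

lemma rhoII_dips (hmaj : ∀ m, PS ξ m ≤ PS η m) (hξa : Antitone ξ) (hξ0 : ∀ n, 0 ≤ ξ n)
    (hη0 : ∀ n, 0 ≤ η n) (hηa : Antitone η) (hηt : Tendsto η atTop (nhds 0)) :
    ∀ r : ℝ, 0 < r → ∀ N : ℕ, ∃ m, N ≤ m ∧ PS η m - PS (rhoII ξ η) m ≤ r := by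
  have hsum_tail_zero : ∀ (f : ℕ → ℝ) (a : ℕ), (∀ j, a ≤ j → f j = 0) →
      ∀ m, a ≤ m → PS f m = PS f a := by
    intro f a hf m ham
    have : m = a + (m - a) := by omega
    rw [this, PS_shift]
    have hz : ∑ i ∈ range (m - a), f (a + i) = 0 := by
      apply Finset.sum_eq_zero
      intro i _
      exact hf _ (by omega)
    rw [hz, add_zero]
  by_cases hbind : ∀ N, ∃ n, N ≤ n ∧ rhoII ξ η n = betaII ξ η n
  · -- bindings happen infinitely often
    intro r hr N
    obtain ⟨n, hnN, hb⟩ := hbind N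
    have hbdd : BddBelow (BII ξ η n (stII ξ η n).1) := by
      refine ⟨ξ n, ?_⟩
      rintro x ⟨m, hm, rfl⟩
      have h1 := stII_inv hmaj n m (le_of_lt hm)
      have h2 : PS ξ (n + 1) = PS ξ n + ξ n := PS_succ ξ n
      simp only
      linarith
    have hlt : sInf (BII ξ η n (stII ξ η n).1) < betaII ξ η n + r := by
      have : betaII ξ η n = sInf (BII ξ η n (stII ξ η n).1) := rfl
      rw [← this]
      linarith
    obtain ⟨x, hxmem, hx⟩ := exists_lt_of_csInf_lt (BII_nonempty ξ η n _) hlt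
    obtain ⟨m, hm, rfl⟩ := hxmem
    have hmn : n < m := hm
    refine ⟨m, by omega, ?_⟩
    -- PS ρ m ≥ PS ρ (n+1) + (PS ξ m - PS ξ (n+1))
    have hsplit : PS (rhoII ξ η) m =
        PS (rhoII ξ η) (n + 1) + ∑ i ∈ range (m - (n + 1)), rhoII ξ η (n + 1 + i) := by
      have h := PS_shift (rhoII ξ η) (n + 1) (m - (n + 1))
      rwa [show (n + 1) + (m - (n + 1)) = m from by omega] at h
    have hξsplit : PS ξ m = PS ξ (n + 1) + ∑ i ∈ range (m - (n + 1)), ξ (n + 1 + i) := by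
      have h := PS_shift ξ (n + 1) (m - (n + 1))
      rwa [show (n + 1) + (m - (n + 1)) = m from by omega] at h
    have hterm : ∑ i ∈ range (m - (n + 1)), ξ (n + 1 + i)
        ≤ ∑ i ∈ range (m - (n + 1)), rhoII ξ η (n + 1 + i) :=
      Finset.sum_le_sum fun i _ => rhoII_ge hmaj hξa _
    have hPSn1 : PS (rhoII ξ η) (n + 1) = (stII ξ η n).1 + rhoII ξ η n := by
      rw [PS_succ, PS_rhoII]
    have hρβ : rhoII ξ η n = betaII ξ η n := hb
    simp only at hx
    linarith
  · -- bindings stop: ρ is eventually constant, hence eventually 0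
    push_neg at hbind
    obtain ⟨N1, hN1⟩ := hbind
    have hconst : ∀ n, N1 ≤ n → rhoII ξ η n = rhoII ξ η N1 := by
      intro n hn
      induction n with
      | zero => have h0 : N1 = 0 := by omega
                rw [h0]
      | succ n ih =>
        rcases Nat.lt_or_ge N1 (n + 1) with h | h
        · have hn' : N1 ≤ n := by omega
          have : rhoII ξ η (n + 1) = rhoII ξ η n := by
            have hne := hN1 (n + 1) (by omega)
            rw [rhoII_eq (n := n + 1)] at hne ⊢
            have h2 : (stII ξ η (n + 1)).2 = rhoII ξ η n := rfl
            rcases min_cases (stII ξ η (n + 1)).2 (betaII ξ η (n + 1)) with ⟨he, _⟩ | ⟨he, _⟩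
            · rw [he, h2]
            · exact absurd he hne
          rw [this, ih hn']
        · have : n + 1 = N1 := by omega
          rw [this]
    have htend := rhoII_tendsto hmaj hξa hξ0 hη0 hηa hηt
    have hN1z : rhoII ξ η N1 = 0 := by
      have h1 : Tendsto (fun _ : ℕ => rhoII ξ η N1) atTop (nhds (rhoII ξ η N1)) :=
        tendsto_const_nhds
      have h2 : Tendsto (fun n => rhoII ξ η n) atTop (nhds (rhoII ξ η N1)) := by
        apply h1.congr'
        filter_upwards [eventually_ge_atTop N1] with n hn
        exact (hconst n hn).symm
      exact tendsto_nhds_unique h2 htend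
    have hex0 : ∃ n, rhoII ξ η n = 0 := ⟨N1, hN1z⟩
    set N0 := Nat.find hex0 with hN0
    have hN0z : rhoII ξ η N0 = 0 := Nat.find_spec hex0
    have hρall : ∀ j, N0 ≤ j → rhoII ξ η j = 0 := by
      intro j hj
      have h1 : rhoII ξ η j ≤ 0 := hN0z ▸ rhoII_antitone hj
      exact le_antisymm h1 (rhoII_nonneg hmaj hξa hξ0 j)
    have hξall : ∀ j, N0 ≤ j → ξ j = 0 := by
      intro j hj
      have := rhoII_ge hmaj hξa (η := η) j
      have := hξ0 j
      have := hρall j hj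
      linarith
    have hetaz : η N0 = 0 ∧ PS (rhoII ξ η) N0 = PS η N0 := by
      -- first show betaII N0 = 0 or η 0 = 0
      have hb0 : betaII ξ η N0 = 0 ∨ η 0 = 0 := by
        rcases Nat.eq_zero_or_pos N0 with h0 | hpos
        · have hρ0 : rhoII ξ η 0 = min (η 0) (betaII ξ η 0) := rfl
          have hz : min (η 0) (betaII ξ η 0) = 0 := by
            rw [← hρ0, ← h0]; exact hN0z
          rcases le_total (η 0) (betaII ξ η 0) with hle | hle
          · right; rw [min_eq_left hle] at hz; exact hz
          · left; rw [min_eq_right hle] at hz; rw [h0]; exact hz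
        · left
          have hprev : rhoII ξ η (N0 - 1) ≠ 0 := Nat.find_min hex0 (by omega)
          have hprevpos : 0 < rhoII ξ η (N0 - 1) :=
            lt_of_le_of_ne (rhoII_nonneg hmaj hξa hξ0 _) (Ne.symm hprev)
          have hstr : (stII ξ η N0).2 = rhoII ξ η (N0 - 1) := by
            have hN : N0 = (N0 - 1) + 1 := by omega
            conv_lhs => rw [hN]
            rfl
          have hρ0 : rhoII ξ η N0 = min (stII ξ η N0).2 (betaII ξ η N0) := rhoII_eq ξ η N0
          rw [hstr, hN0z] at hρ0
          rcases le_total (rhoII ξ η (N0 - 1)) (betaII ξ η N0) with hle | hle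
          · exfalso; rw [min_eq_left hle] at hρ0; linarith
          · rw [min_eq_right hle] at hρ0; exact hρ0.symm
      rcases hb0 with hb0 | hb0
      · -- betaII N0 = 0 forces η N0 = 0 and PS ρ N0 = PS η N0
        have hSle : PS (rhoII ξ η) N0 ≤ PS η N0 := PS_rhoII_le hmaj N0
        have hkey : PS η (N0 + 1) - PS (rhoII ξ η) N0 ≤ 0 := by
          rw [← hb0]
          apply le_csInf (BII_nonempty ξ η N0 _)
          rintro x ⟨m, hm, rfl⟩
          have hmn : N0 < m := hm
          have hξeq : PS ξ m = PS ξ (N0 + 1) := by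
            apply hsum_tail_zero ξ (N0 + 1) (fun j hj => hξall j (by omega)) m (by omega)
          have hηm : PS η (N0 + 1) ≤ PS η m := PS_mono hη0 (by omega)
          rw [PS_rhoII]
          simp only
          linarith
        have h1 : PS η N0 ≤ PS η (N0 + 1) := PS_mono hη0 (Nat.le_succ _)
        have h2 : PS η (N0 + 1) = PS η N0 + η N0 := PS_succ η N0
        constructor
        · linarith [hη0 N0]
        · linarith [hη0 N0]
      · -- η ≡ 0
        have hηall : ∀ j, η j = 0 := fun j => le_antisymm (hb0 ▸ hηa (Nat.zero_le j)) (hη0 j)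
        have hPSη : ∀ m, PS η m = 0 := by
          intro m
          have := hsum_tail_zero η 0 (fun j _ => hηall j) m (Nat.zero_le m)
          rw [this, PS_zero]
        constructor
        · exact hηall N0
        · have h1 : PS (rhoII ξ η) N0 ≤ PS η N0 := PS_rhoII_le hmaj N0
          have h2 : 0 ≤ PS (rhoII ξ η) N0 := by
            apply Finset.sum_nonneg
            intro j _
            exact rhoII_nonneg hmaj hξa hξ0 j
          rw [hPSη] at h1 ⊢
          linarith
    intro r hr N
    refine ⟨max N N0, le_max_left _ _, ?_⟩
    have hηtail : ∀ j, N0 ≤ j → η j = 0 := by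
      intro j hj
      exact le_antisymm (hetaz.1 ▸ hηa hj) (hη0 j)
    have h1 : PS η (max N N0) = PS η N0 :=
      hsum_tail_zero η N0 hηtail _ (le_max_right _ _)
    have h2 : PS (rhoII ξ η) (max N N0) = PS (rhoII ξ η) N0 :=
      hsum_tail_zero (rhoII ξ η) N0 hρall _ (le_max_right _ _)
    rw [h1, h2, hetaz.2]
    linarith

end PartII


end Stmt17Aux

open Stmt17Aux in
/-- If `ξ, η ∈ c₀*` and `ξ ≺ η`, then there exist `ζ, ρ ∈ c₀*` with
`ξ ≼ ζ ≤ η` and `ξ ≤ ρ ≼ η`. -/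
theorem stmt_17 (ξ η : ℕ → ℝ) (hξ : IsCoStar ξ) (hη : IsCoStar η) (hmaj : Maj ξ η) :
    (∃ ζ : ℕ → ℝ, IsCoStar ζ ∧ SMaj ξ ζ ∧ ∀ j, ζ j ≤ η j) ∧
    (∃ ρ : ℕ → ℝ, IsCoStar ρ ∧ (∀ j, ξ j ≤ ρ j) ∧ SMaj ρ η) := by
  obtain ⟨hξ0, hξa, hξt⟩ := hξ
  obtain ⟨hη0, hηa, hηt⟩ := hη
  have hmaj' : ∀ n, PS ξ n ≤ PS η n := fun n => hmaj n
  constructor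
  · -- part (i)
    have key : ∃ ζ : ℕ → ℝ, (∀ n, 0 ≤ ζ n) ∧ Antitone ζ ∧ (∀ n, ζ n ≤ η n) ∧
        (∀ n, PS ξ n ≤ PS ζ n) ∧
        (∀ r : ℝ, 0 < r → ∀ N : ℕ, ∃ m, N ≤ m ∧ PS ζ m - PS ξ m ≤ r) := by
      by_cases hB : BddAbove (Set.range (PS ξ))
      · obtain ⟨ζ, h1, h2, h3, h4, h5⟩ := part_i_bounded hξ0 hη0 hηa hmaj' hB
        refine ⟨ζ, h1, h2, h3, h4, ?_⟩
        intro r hr N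
        have hev := h5.eventually (gt_mem_nhds hr)
        rw [eventually_atTop] at hev
        obtain ⟨N0, hN0⟩ := hev
        exact ⟨max N N0, le_max_left _ _, le_of_lt (hN0 _ (le_max_right _ _))⟩
      · exact part_i_unbounded hη0 hmaj' hηa hηt hB hξ0
    obtain ⟨ζ, h1, h2, h3, h4, h5⟩ := key
    refine ⟨ζ, ⟨h1, h2, squeeze_zero h1 h3 hηt⟩, ⟨fun n => h4 n, ?_⟩, h3⟩
    have hfun : (fun n => ((∑ j ∈ range n, (ζ j - ξ j) : ℝ) : EReal))
        = fun n => ((PS ζ n - PS ξ n : ℝ) : EReal) := by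
      funext n
      rw [Finset.sum_sub_distrib]
      rfl
    rw [hfun]
    exact liminf_zero_of_dips (fun n => by linarith [h4 n]) h5
  · -- part (ii)
    refine ⟨rhoII ξ η,
      ⟨rhoII_nonneg hmaj' hξa hξ0, rhoII_antitone,
        rhoII_tendsto hmaj' hξa hξ0 hη0 hηa hηt⟩,
      rhoII_ge hmaj' hξa, ⟨fun n => PS_rhoII_le hmaj' n, ?_⟩⟩
    have hfun : (fun n => ((∑ j ∈ range n, (η j - rhoII ξ η j) : ℝ) : EReal))
        = fun n => ((PS η n - PS (rhoII ξ η) n : ℝ) : EReal) := by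
      funext n
      rw [Finset.sum_sub_distrib]
      rfl
    rw [hfun]
    exact liminf_zero_of_dips (fun n => by linarith [PS_rhoII_le hmaj' n])
      (rhoII_dips hmaj' hξa hξ0 hη0 hηa hηt)

end
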